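/- Let p be a real number with p > 1. Then the series ∑_{ℓ=0}^∞ (centralBinom (ℓ+2))·(p/(p+1)²)^{ℓ+2} converges and equals 2·(3p + 1) / ((p − 1)·(p+1)²). -/

import Mathlib

open Polynomial Finset

lemma descP_succ (r : ℝ) (n : ℕ) :
    (descPochhammer ℤ (n+1)).smeval r = (descPochhammer ℤ n).smeval r * (r - n) := by
  rw [descPochhammer_succ_right, smeval_mul, smeval_sub, smeval_X, smeval_natCast]
  simp

lemma rchoose_eq (r : ℝ) (n : ℕ) :
    Ring.choose r n = (descPochhammer ℤ n).smeval r / n.factorial := by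
  have h := Ring.descPochhammer_eq_factorial_smul_choose r n
  rw [h, nsmul_eq_mul]
  have : (n.factorial : ℝ) ≠ 0 := Nat.cast_ne_zero.2 n.factorial_ne_zero
  field_simp

lemma smeval_neg_half (n : ℕ) :
    (descPochhammer ℤ n).smeval (-(2⁻¹) : ℝ) = (-(4⁻¹))^n * Nat.centralBinom n * n.factorial := by
  induction n with
  | zero => simp [descPochhammer_zero, smeval_one, Nat.centralBinom_zero]
  | succ n ih =>
    have h := Nat.succ_mul_centralBinom_succ n
    have h' : ((n:ℝ)+1) * Nat.centralBinom (n+1) = 2 * (2*n+1) * Nat.centralBinom n := by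
      exact_mod_cast congrArg (Nat.cast : ℕ → ℝ) h
    rw [descP_succ, ih, Nat.factorial_succ]
    push_cast
    linear_combination ((-(4⁻¹:ℝ))^n * n.factorial * (4⁻¹)) * h'

lemma smeval_neg_one (n : ℕ) :
    (descPochhammer ℤ n).smeval (-1 : ℝ) = (-1)^n * n.factorial := by
  induction n with
  | zero => simp [descPochhammer_zero, smeval_one]
  | succ n ih =>
    rw [descP_succ, ih, Nat.factorial_succ]
    push_cast
    ring

lemma rchoose_neg_half (n : ℕ) :
    Ring.choose (-(2⁻¹) : ℝ) n = (-(4⁻¹))^n * Nat.centralBinom n := by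
  rw [rchoose_eq, smeval_neg_half]
  have : (n.factorial : ℝ) ≠ 0 := Nat.cast_ne_zero.2 n.factorial_ne_zero
  field_simp

lemma centralBinom_conv (n : ℕ) :
    ∑ ij ∈ antidiagonal n, (Nat.centralBinom ij.1 : ℝ) * Nat.centralBinom ij.2 = 4 ^ n := by
  have hv := Ring.add_choose_eq (R := ℝ) (r := -(2⁻¹)) (s := -(2⁻¹)) n (Commute.all _ _)
  have h1 : Ring.choose ((-(2⁻¹) : ℝ) + -(2⁻¹)) n = (-1)^n := by
    norm_num
    rw [show ((-1:ℝ)) = -(1:ℝ) by ring, rchoose_eq, smeval_neg_one]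
    have : (n.factorial : ℝ) ≠ 0 := Nat.cast_ne_zero.2 n.factorial_ne_zero
    field_simp
  have h2 : ∑ ij ∈ antidiagonal n, Ring.choose (-(2⁻¹) : ℝ) ij.1 * Ring.choose (-(2⁻¹) : ℝ) ij.2
      = (-(4⁻¹))^n * ∑ ij ∈ antidiagonal n, (Nat.centralBinom ij.1 : ℝ) * Nat.centralBinom ij.2 := by
    rw [mul_sum]
    refine sum_congr rfl fun ij hij => ?_
    rw [rchoose_neg_half, rchoose_neg_half, ← (mem_antidiagonal.mp hij), pow_add]
    ring
  rw [h1, h2] at hv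
  set S := ∑ ij ∈ antidiagonal n, (Nat.centralBinom ij.1 : ℝ) * Nat.centralBinom ij.2 with hS
  calc S = (-4:ℝ)^n * ((-(4⁻¹))^n * S) := by rw [← mul_assoc, ← mul_pow]; norm_num
    _ = (-4:ℝ)^n * (-1)^n := by rw [← hv]
    _ = 4^n := by rw [← mul_pow]; norm_num


lemma centralBinom_le_four_pow (n : ℕ) : Nat.centralBinom n ≤ 4 ^ n := by
  have h : Nat.centralBinom n ≤ ∑ m ∈ range (2*n+1), (2*n).choose m := by
    rw [Nat.centralBinom]
    exact Finset.single_le_sum (f := fun m => (2*n).choose m) (fun i _ => Nat.zero_le _)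
      (Finset.mem_range.2 (by omega))
  calc Nat.centralBinom n ≤ 2 ^ (2*n) := by
        simpa [Nat.sum_range_choose] using h
    _ = 4 ^ n := by rw [pow_mul]; norm_num

lemma hasSum_centralBinom_sqrt {x : ℝ} (hx0 : 0 ≤ x) (hx : x < 4⁻¹) {s : ℝ} (hs : 0 < s)
    (hsq : s ^ 2 = (1 - 4 * x)⁻¹) :
    HasSum (fun n : ℕ => (Nat.centralBinom n : ℝ) * x ^ n) s := by
  set f : ℕ → ℝ := fun n => (Nat.centralBinom n : ℝ) * x ^ n with hf
  have hnorm : Summable fun n => ‖f n‖ := by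
    apply Summable.of_nonneg_of_le (fun n => norm_nonneg _) (fun n => ?_)
      (summable_geometric_of_lt_one (by positivity) (by linarith) : Summable fun n => (4*x)^n)
    rw [Real.norm_of_nonneg (by positivity)]
    rw [mul_pow]
    refine mul_le_mul_of_nonneg_right ?_ (by positivity)
    exact_mod_cast centralBinom_le_four_pow n
  have hsum : Summable f := hnorm.of_norm
  have hcauchy := tsum_mul_tsum_eq_tsum_sum_antidiagonal_of_summable_norm hnorm hnorm
  have hg : ∀ n : ℕ, ∑ kl ∈ antidiagonal n, f kl.1 * f kl.2 = (4*x)^n := by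
    intro n
    have : ∑ kl ∈ antidiagonal n, f kl.1 * f kl.2
        = (∑ kl ∈ antidiagonal n, (Nat.centralBinom kl.1 : ℝ) * Nat.centralBinom kl.2) * x ^ n := by
      rw [sum_mul]
      refine sum_congr rfl fun kl hkl => ?_
      rw [← mem_antidiagonal.mp hkl, pow_add, hf]
      ring
    rw [this, centralBinom_conv, mul_pow]
  have hx4 : |4 * x| < 1 := by rw [abs_of_nonneg (by positivity)]; linarith
  have hgeo : ∑' n : ℕ, (4*x)^n = (1 - 4*x)⁻¹ := tsum_geometric_of_abs_lt_one hx4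
  have hS : (∑' n, f n) * (∑' n, f n) = (1 - 4*x)⁻¹ := by
    rw [hcauchy]; rw [tsum_congr hg, hgeo]
  have hpos : 0 < ∑' n, f n := by
    have h0 : (0:ℝ) < f 0 := by simp [hf, Nat.centralBinom_zero]
    exact h0.trans_le (Summable.le_tsum hsum 0 (fun i _ => by positivity))
  have : (∑' n, f n) = s := by
    have h2 : (∑' n, f n) ^ 2 = s ^ 2 := by rw [hsq, sq, hS]
    nlinarith [hpos, hs]
  exact this ▸ hsum.hasSum

theorem centralBinom_tail_at_prime_weight (p : ℝ) (hp : 1 < p) :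
    HasSum (fun l : ℕ => (Nat.centralBinom (l + 2) : ℝ) * (p / (p + 1) ^ 2) ^ (l + 2))
      (2 * (3 * p + 1) / ((p - 1) * (p + 1) ^ 2)) := by
  have hp0 : (0:ℝ) < p + 1 := by linarith
  have hp1 : (0:ℝ) < p - 1 := by linarith
  set x := p / (p + 1) ^ 2 with hx
  have hx0 : 0 ≤ x := by positivity
  have hxlt : x < 4⁻¹ := by
    rw [hx, div_lt_iff₀ (by positivity)]
    nlinarith [sq_nonneg (p - 1)]
  have hs : (0:ℝ) < (p + 1) / (p - 1) := by positivity
  have hsq : ((p + 1) / (p - 1)) ^ 2 = (1 - 4 * x)⁻¹ := by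
    rw [hx]
    have h1 : 1 - 4 * (p / (p + 1) ^ 2) = (p - 1) ^ 2 / (p + 1) ^ 2 := by
      field_simp
      ring
    rw [h1]
    field_simp
  have hsum := hasSum_centralBinom_sqrt hx0 hxlt hs hsq
  have hT : 2 * (3 * p + 1) / ((p - 1) * (p + 1) ^ 2)
      + ∑ i ∈ range 2, (Nat.centralBinom i : ℝ) * x ^ i = (p + 1) / (p - 1) := by
    rw [Finset.sum_range_succ, Finset.sum_range_one, hx]
    have h1 : Nat.centralBinom 1 = 2 := rfl
    rw [Nat.centralBinom_zero, h1]
    push_cast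
    field_simp
    ring
  have := (hasSum_nat_add_iff
      (f := fun n => (Nat.centralBinom n : ℝ) * x ^ n) 2).mpr (by rwa [hT])
  exact this
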